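/- Let n ≥ 1, s > -1 and let k ≥ 0, p ≥ 1, q ≥ 1 be integers. Then the integral c_{pq,n+k}(s) := ∫₀¹ t^{n-1}(1-t)^s [(2t d/dt)^{n+k} (t^{(p+q)/2} S_pq(t))]² dt is finite if and only if s > 2k - 1. -/

import Mathlib

open MeasureTheory ENNReal NNReal

/-- Pochhammer symbol `(a)_k = Γ(a+k)/Γ(a)`. -/
noncomputable def poch (a : ℝ) (k : ℕ) : ℝ := Real.Gamma (a + k) / Real.Gamma a

/-- Gauss hypergeometric function `₂F₁(a,b;c;t)`, as a sum of its series. -/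
noncomputable def hyp2F1 (a b c t : ℝ) : ℝ :=
  ∑' k : ℕ, (poch a k * poch b k) / (poch c k * (Nat.factorial k)) * t ^ k

/-- `S_pq(t)`. -/
noncomputable def Spq (n p q : ℕ) (t : ℝ) : ℝ :=
  (Real.Gamma (n + p) * Real.Gamma (n + q)) / (Real.Gamma n * Real.Gamma ((n : ℝ) + p + q)) *
    hyp2F1 p q ((p : ℝ) + q + n) t

/-- `c_pq(s)`. -/
noncomputable def cpq (n p q : ℕ) (s : ℝ) : ℝ :=
  poch (s + 1) n / Real.Gamma n *
    ∫ t in Set.Ioo (0:ℝ) 1, t ^ ((p : ℝ) + q + n - 1) * (1 - t) ^ s * (Spq n p q t) ^ 2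

/-- The operator `u(t) ↦ 2t u'(t)`. -/
noncomputable def opD (g : ℝ → ℝ) : ℝ → ℝ := fun t => 2 * t * deriv g t

/-- `c_{pq,k}(s) = ∫₀¹ t^{n-1}(1-t)^s [(2t d/dt)^k (t^{(p+q)/2} S_pq(t))]² dt`. -/
noncomputable def cpqk (n p q : ℕ) (s : ℝ) (k : ℕ) : ℝ :=
  ∫ t in Set.Ioo (0:ℝ) 1, t ^ ((n : ℝ) - 1) * (1 - t) ^ s *
    (opD^[k] (fun u => u ^ (((p : ℝ) + q) / 2) * Spq n p q u) t) ^ 2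

/-- `I_pqs(ν,k) = ∫₀¹ t^{p+q+ν-1+k}(1-t)^s ₂F₁(p,q;p+q+ν;t)² dt`. -/
noncomputable def Ipqs (p q : ℕ) (s : ℝ) (ν k : ℕ) : ℝ :=
  ∫ t in Set.Ioo (0:ℝ) 1, t ^ ((p : ℝ) + q + ν - 1 + k) * (1 - t) ^ s *
    (hyp2F1 p q ((p : ℝ) + q + ν) t) ^ 2


namespace Stmt18
open MeasureTheory Set Filter


/-- `(j+m).ascFactorial K` lower bound. -/
lemma asc_lower (m j K : ℕ) (hm : 1 ≤ m) : (j + 1) ^ K ≤ (j + m).ascFactorial K := by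
  induction K with
  | zero => simp
  | succ K ih =>
    rw [Nat.ascFactorial_succ, pow_succ]
    have h1 : j + 1 ≤ j + m + K := by omega
    calc (j+1)^K * (j+1) ≤ (j + m).ascFactorial K * (j + m + K) :=
      Nat.mul_le_mul ih h1
    _ = (j + m + K) * (j + m).ascFactorial K := by ring

/-- `(j+m).ascFactorial K` upper bound. -/
lemma asc_upper (m j K : ℕ) (hm : 1 ≤ m) :
    (j + m).ascFactorial K ≤ m.ascFactorial K * (j + 1) ^ K := by
  induction K with
  | zero => simp
  | succ K ih =>
    rw [Nat.ascFactorial_succ, Nat.ascFactorial_succ, pow_succ]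
    have h1 : j + m + K ≤ (m + K) * (j + 1) := by nlinarith [Nat.one_le_iff_ne_zero.mp hm]
    calc (j + m + K) * (j + m).ascFactorial K
        ≤ ((m + K) * (j+1)) * (m.ascFactorial K * (j + 1) ^ K) := Nat.mul_le_mul h1 ih
      _ = (m + K) * m.ascFactorial K * ((j + 1) ^ K * (j+1)) := by ring

lemma asc_eq_choose (j K : ℕ) :
    (j + 1).ascFactorial K = K.factorial * (j + K).choose K := by
  have h1 : j.factorial * (j + 1).ascFactorial K = (j + K).factorial :=
    Nat.factorial_mul_ascFactorial j K
  have h2 : (j + K).choose K * K.factorial * j.factorial = (j + K).factorial := by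
    have := Nat.choose_mul_factorial_mul_factorial (Nat.le_add_left K j)
    simpa [Nat.add_sub_cancel] using this
  refine Nat.eq_of_mul_eq_mul_left j.factorial_pos ?_
  rw [h1, ← h2]; ring



lemma asc_lower' (m j K : ℕ) (hm : 1 ≤ m) : ((j:ℝ) + 1) ^ K ≤ ((j + m).ascFactorial K : ℝ) := by
  exact_mod_cast asc_lower m j K hm

lemma asc_upper' (m j K : ℕ) (hm : 1 ≤ m) :
    ((j + m).ascFactorial K : ℝ) ≤ (m.ascFactorial K : ℝ) * ((j:ℝ) + 1) ^ K := by
  exact_mod_cast asc_upper m j K hm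

lemma asc_pos' (m j K : ℕ) (hm : 1 ≤ m) : (0:ℝ) < ((j + m).ascFactorial K : ℝ) :=
  lt_of_lt_of_le (by positivity) (asc_lower' m j K hm)

/-- `HasSum` of the ascFactorial power series. -/
lemma hasSum_asc {t : ℝ} (ht : |t| < 1) (K : ℕ) :
    HasSum (fun j : ℕ => ((j + 1).ascFactorial K : ℝ) * t ^ j)
      (K.factorial / (1 - t) ^ (K + 1)) := by
  have h := hasSum_choose_mul_geometric_of_norm_lt_one (𝕜 := ℝ) K (by simpa using ht)
  have h2 := h.mul_left (K.factorial : ℝ)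
  rw [mul_one_div] at h2
  have he : (fun j : ℕ => ((j + 1).ascFactorial K : ℝ) * t ^ j)
      = (fun j : ℕ => (K.factorial : ℝ) * (((j + K).choose K : ℝ) * t ^ j)) := by
    funext j
    rw [asc_eq_choose]
    push_cast
    ring
  rw [he]
  exact h2

/-- Summability of `(j+1)^i * r^j`. -/
lemma summable_pow_succ (i : ℕ) {r : ℝ} (h0 : 0 ≤ r) (h1 : r < 1) :
    Summable (fun j : ℕ => ((j:ℝ) + 1) ^ i * r ^ j) := by
  have hs : Summable (fun j : ℕ => ((j + 1).ascFactorial i : ℝ) * r ^ j) :=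
    (hasSum_asc (by rwa [abs_of_nonneg h0]) i).summable
  refine hs.of_nonneg_of_le (fun j => by positivity) (fun j => ?_)
  have := asc_lower' 1 j i le_rfl
  exact mul_le_mul_of_nonneg_right this (by positivity)

/-- integrability of `(1-t)^r` on `Ioo a 1`. -/
lemma integrableOn_one_sub_rpow_iff {a : ℝ} (ha : 0 ≤ a) (ha1 : a < 1) (r : ℝ) :
    IntegrableOn (fun t : ℝ => (1 - t) ^ r) (Ioo a 1) ↔ -1 < r := by
  rw [← intervalIntegrable_iff_integrableOn_Ioo_of_le ha1.le]
  rw [← intervalIntegral.integrableOn_Ioo_rpow_iff (show (0:ℝ) < 1 - a by linarith),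
    ← intervalIntegrable_iff_integrableOn_Ioo_of_le (by linarith : (0:ℝ) ≤ 1 - a)]
  constructor
  · intro h
    have := h.comp_sub_left 1
    simpa using this.symm
  · intro h
    have := h.comp_sub_left 1
    have h2 : IntervalIntegrable (fun x : ℝ => (1 - x) ^ r) volume (1 - (1-a)) (1 - 0) := by
      simpa using this.symm
    simpa using h2

/-- `-log (1-t) ≤ ε⁻¹ (1-t)^(-ε)`. -/
lemma neg_log_le {t ε : ℝ} (ht0 : 0 < t) (ht1 : t < 1) (hε : 0 < ε) :
    -Real.log (1 - t) ≤ ε⁻¹ * (1 - t) ^ (-ε) := by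
  have h1t : 0 < 1 - t := by linarith
  have hy : (0:ℝ) < (1 - t)⁻¹ := by positivity
  have e1 : -Real.log (1 - t) = Real.log ((1 - t)⁻¹) := by rw [Real.log_inv]
  have e2 : (1 - t) ^ (-ε) = ((1 - t)⁻¹) ^ ε := by
    rw [Real.rpow_neg h1t.le, ← Real.inv_rpow h1t.le]
  rw [e1, e2]
  have h3 : Real.log ((1 - t)⁻¹) = ε⁻¹ * Real.log (((1 - t)⁻¹) ^ ε) := by
    rw [Real.log_rpow hy]; field_simp
  rw [h3]
  have h4 : Real.log (((1 - t)⁻¹) ^ ε) ≤ ((1 - t)⁻¹) ^ ε - 1 :=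
    Real.log_le_sub_one_of_pos (Real.rpow_pos_of_pos hy ε)
  have h5 : Real.log (((1 - t)⁻¹) ^ ε) ≤ ((1 - t)⁻¹) ^ ε := by
    nlinarith [h4]
  exact mul_le_mul_of_nonneg_left h5 (by positivity)


/-- The coefficients of the hypergeometric series. -/
noncomputable def bb (n p q : ℕ) (j : ℕ) : ℝ :=
  poch p j * poch q j / (poch ((p : ℝ) + q + n) j * (Nat.factorial j))

/-- The Gamma prefactor in `Spq`. -/
noncomputable def CG (n p q : ℕ) : ℝ :=
  (Real.Gamma (n + p) * Real.Gamma (n + q)) / (Real.Gamma n * Real.Gamma ((n : ℝ) + p + q))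

/-- Coefficients after applying `opD` `i` times. -/
noncomputable def aa (n p q : ℕ) (i j : ℕ) : ℝ :=
  CG n p q * bb n p q j * (2 * (j : ℝ) + p + q) ^ i

lemma Spq_eq (n p q : ℕ) (t : ℝ) : Spq n p q t = ∑' j, aa n p q 0 j * t ^ j := by
  have : Spq n p q t = CG n p q * ∑' j, bb n p q j * t ^ j := rfl
  have h2 : CG n p q * ∑' j, bb n p q j * t ^ j = ∑' j, CG n p q * (bb n p q j * t ^ j) :=
    (_root_.tsum_mul_left).symm
  rw [this, h2]
  refine tsum_congr fun j => ?_
  simp [aa]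
  ring

lemma poch_nat (P j : ℕ) : poch ((P : ℝ) + 1) j = ((P + j).factorial : ℝ) / (P.factorial : ℝ) := by
  unfold poch
  have h1 : (P : ℝ) + 1 + j = ((P + j : ℕ) : ℝ) + 1 := by push_cast; ring
  rw [h1, Real.Gamma_nat_eq_factorial, show ((P : ℝ) + 1) = ((P : ℕ) : ℝ) + 1 from rfl,
    Real.Gamma_nat_eq_factorial]

lemma bb_eq (N P Q j : ℕ) :
    bb (N + 1) (P + 1) (Q + 1) j
      = (((P + Q + N + 2).factorial : ℝ) / ((P.factorial : ℝ) * (Q.factorial : ℝ)))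
          * (((j + 1).ascFactorial Q : ℝ) / ((j + (P + 1)).ascFactorial (Q + N + 2) : ℝ)) := by
  have e1 : poch ((P + 1 : ℕ) : ℝ) j = ((P + j).factorial : ℝ) / (P.factorial : ℝ) := by
    rw [show ((P + 1 : ℕ) : ℝ) = (P : ℝ) + 1 by push_cast; ring]; exact poch_nat P j
  have e2 : poch ((Q + 1 : ℕ) : ℝ) j = ((Q + j).factorial : ℝ) / (Q.factorial : ℝ) := by
    rw [show ((Q + 1 : ℕ) : ℝ) = (Q : ℝ) + 1 by push_cast; ring]; exact poch_nat Q j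
  have e3 : poch (((P + 1 : ℕ) : ℝ) + ((Q + 1 : ℕ) : ℝ) + ((N + 1 : ℕ) : ℝ)) j
      = (((P + Q + N + 2) + j).factorial : ℝ) / ((P + Q + N + 2).factorial : ℝ) := by
    rw [show ((P + 1 : ℕ) : ℝ) + ((Q + 1 : ℕ) : ℝ) + ((N + 1 : ℕ) : ℝ)
        = ((P + Q + N + 2 : ℕ) : ℝ) + 1 by push_cast; ring]
    exact poch_nat _ j
  have f1 : ((Q + j).factorial : ℝ) = (j.factorial : ℝ) * ((j + 1).ascFactorial Q : ℝ) := by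
    rw [show Q + j = j + Q by omega]
    exact_mod_cast (Nat.factorial_mul_ascFactorial j Q).symm
  have f2 : (((P + Q + N + 2) + j).factorial : ℝ)
      = ((P + j).factorial : ℝ) * ((j + (P + 1)).ascFactorial (Q + N + 2) : ℝ) := by
    rw [show (P + Q + N + 2) + j = (P + j) + (Q + N + 2) by omega,
      show j + (P + 1) = (P + j) + 1 by omega]
    exact_mod_cast (Nat.factorial_mul_ascFactorial (P + j) (Q + N + 2)).symm
  rw [bb, e1, e2, e3, f1, f2]
  have h1 : (0:ℝ) < (P.factorial : ℝ) := by exact_mod_cast P.factorial_pos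
  have h2 : (0:ℝ) < (Q.factorial : ℝ) := by exact_mod_cast Q.factorial_pos
  have h3 : (0:ℝ) < (j.factorial : ℝ) := by exact_mod_cast j.factorial_pos
  have h4 : (0:ℝ) < ((P + j).factorial : ℝ) := by exact_mod_cast (P+j).factorial_pos
  have h5 : (0:ℝ) < ((P + Q + N + 2).factorial : ℝ) := by
    exact_mod_cast (P + Q + N + 2).factorial_pos
  have h6 : (0:ℝ) < ((j + (P + 1)).ascFactorial (Q + N + 2) : ℝ) := asc_pos' (P+1) j _ (by omega)
  field_simp

lemma CG_pos (N P Q : ℕ) : 0 < CG (N + 1) (P + 1) (Q + 1) := by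
  unfold CG
  have g1 : (0:ℝ) < Real.Gamma ((N + 1 : ℕ) + (P + 1 : ℕ)) :=
    Real.Gamma_pos_of_pos (by push_cast; linarith)
  have g2 : (0:ℝ) < Real.Gamma ((N + 1 : ℕ) + (Q + 1 : ℕ)) :=
    Real.Gamma_pos_of_pos (by push_cast; linarith)
  have g3 : (0:ℝ) < Real.Gamma ((N + 1 : ℕ) : ℝ) :=
    Real.Gamma_pos_of_pos (by push_cast; linarith)
  have g4 : (0:ℝ) < Real.Gamma (((N + 1 : ℕ) : ℝ) + (P + 1 : ℕ) + (Q + 1 : ℕ)) :=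
    Real.Gamma_pos_of_pos (by push_cast; linarith)
  positivity

/-- Two-sided bounds for the coefficients `aa`. -/
lemma aa_bounds (N P Q i : ℕ) : ∃ c1 c2 : ℝ, 0 < c1 ∧ 0 < c2 ∧ ∀ j : ℕ,
    c1 * ((j:ℝ) + 1) ^ i / ((j:ℝ) + 1) ^ (N + 2) ≤ aa (N+1) (P+1) (Q+1) i j ∧
    aa (N+1) (P+1) (Q+1) i j ≤ c2 * ((j:ℝ) + 1) ^ i / ((j:ℝ) + 1) ^ (N + 2) := by
  set A : ℝ := ((P + Q + N + 2).factorial : ℝ) / ((P.factorial : ℝ) * (Q.factorial : ℝ)) with hA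
  have hApos : 0 < A := by
    have h5 : (0:ℝ) < ((P + Q + N + 2).factorial : ℝ) := by
      exact_mod_cast (P + Q + N + 2).factorial_pos
    have h1 : (0:ℝ) < (P.factorial : ℝ) := by exact_mod_cast P.factorial_pos
    have h2 : (0:ℝ) < (Q.factorial : ℝ) := by exact_mod_cast Q.factorial_pos
    positivity
  have hCG := CG_pos N P Q
  have hasc : (0:ℝ) < ((P+1).ascFactorial (Q + N + 2) : ℝ) := by
    have := asc_pos' (P+1) 0 (Q+N+2) (by omega); simpa using this
  refine ⟨CG (N+1) (P+1) (Q+1) * (A / ((P+1).ascFactorial (Q + N + 2) : ℝ)) * 2 ^ i,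
    CG (N+1) (P+1) (Q+1) * (A * (Q.factorial : ℝ)) * ((P:ℝ) + Q + 2) ^ i,
    by positivity, by positivity, fun j => ?_⟩
  have hj1 : (0:ℝ) < (j:ℝ) + 1 := by positivity
  -- bounds for bb
  have hbb := bb_eq N P Q j
  have hup : bb (N+1) (P+1) (Q+1) j ≤ A * (Q.factorial : ℝ) / ((j:ℝ) + 1) ^ (N + 2) := by
    rw [hbb]
    have hnum : ((j + 1).ascFactorial Q : ℝ) ≤ (Q.factorial : ℝ) * ((j:ℝ) + 1) ^ Q := by
      have := asc_upper' 1 j Q le_rfl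
      simpa [Nat.one_ascFactorial] using this
    have hden : ((j:ℝ) + 1) ^ (Q + N + 2) ≤ ((j + (P+1)).ascFactorial (Q + N + 2) : ℝ) :=
      asc_lower' (P+1) j _ (by omega)
    have h6 : (0:ℝ) < ((j + (P + 1)).ascFactorial (Q + N + 2) : ℝ) := asc_pos' (P+1) j _ (by omega)
    have key : ((j + 1).ascFactorial Q : ℝ) / ((j + (P+1)).ascFactorial (Q + N + 2) : ℝ)
        ≤ ((Q.factorial : ℝ) * ((j:ℝ) + 1) ^ Q) / ((j:ℝ) + 1) ^ (Q + N + 2) := by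
      apply div_le_div₀ (by positivity) hnum (by positivity) hden
    have e : ((Q.factorial : ℝ) * ((j:ℝ) + 1) ^ Q) / ((j:ℝ) + 1) ^ (Q + N + 2)
        = (Q.factorial : ℝ) / ((j:ℝ) + 1) ^ (N + 2) := by
      rw [pow_add]
      field_simp
      ring
    rw [e] at key
    calc A * (((j + 1).ascFactorial Q : ℝ) / ((j + (P+1)).ascFactorial (Q + N + 2) : ℝ))
        ≤ A * ((Q.factorial : ℝ) / ((j:ℝ) + 1) ^ (N + 2)) :=
          mul_le_mul_of_nonneg_left key hApos.le
      _ = A * (Q.factorial : ℝ) / ((j:ℝ) + 1) ^ (N + 2) := by ring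
  have hlo : A / ((P+1).ascFactorial (Q + N + 2) : ℝ) / ((j:ℝ) + 1) ^ (N + 2)
      ≤ bb (N+1) (P+1) (Q+1) j := by
    rw [hbb]
    have hnum : ((j:ℝ) + 1) ^ Q ≤ ((j + 1).ascFactorial Q : ℝ) := asc_lower' 1 j Q le_rfl
    have hden : ((j + (P+1)).ascFactorial (Q + N + 2) : ℝ)
        ≤ ((P+1).ascFactorial (Q + N + 2) : ℝ) * ((j:ℝ) + 1) ^ (Q + N + 2) :=
      asc_upper' (P+1) j _ (by omega)
    have h6 : (0:ℝ) < ((j + (P + 1)).ascFactorial (Q + N + 2) : ℝ) := asc_pos' (P+1) j _ (by omega)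
    have key : ((j:ℝ) + 1) ^ Q / (((P+1).ascFactorial (Q + N + 2) : ℝ) * ((j:ℝ) + 1) ^ (Q + N + 2))
        ≤ ((j + 1).ascFactorial Q : ℝ) / ((j + (P+1)).ascFactorial (Q + N + 2) : ℝ) := by
      apply div_le_div₀ (by positivity) hnum h6 hden
    have e : ((j:ℝ) + 1) ^ Q / (((P+1).ascFactorial (Q + N + 2) : ℝ) * ((j:ℝ) + 1) ^ (Q + N + 2))
        = 1 / ((P+1).ascFactorial (Q + N + 2) : ℝ) / ((j:ℝ) + 1) ^ (N + 2) := by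
      rw [pow_add]
      field_simp
      ring
    rw [e] at key
    calc A / ((P+1).ascFactorial (Q + N + 2) : ℝ) / ((j:ℝ) + 1) ^ (N + 2)
        = A * (1 / ((P+1).ascFactorial (Q + N + 2) : ℝ) / ((j:ℝ) + 1) ^ (N + 2)) := by ring
      _ ≤ A * (((j + 1).ascFactorial Q : ℝ) / ((j + (P+1)).ascFactorial (Q + N + 2) : ℝ)) :=
          mul_le_mul_of_nonneg_left key hApos.le
  -- bounds for (2j+p+q)^i
  have hx : (2:ℝ) * j + (P+1:ℕ) + (Q+1:ℕ) = 2 * (j:ℝ) + P + Q + 2 := by push_cast; ring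
  have hxlo : (2:ℝ) ^ i * ((j:ℝ) + 1) ^ i ≤ (2 * (j:ℝ) + P + Q + 2) ^ i := by
    rw [← mul_pow]
    apply pow_le_pow_left₀ (by positivity)
    push_cast; nlinarith [Nat.cast_nonneg (α := ℝ) P, Nat.cast_nonneg (α := ℝ) Q]
  have hxup : (2 * (j:ℝ) + P + Q + 2) ^ i ≤ ((P:ℝ) + Q + 2) ^ i * ((j:ℝ) + 1) ^ i := by
    rw [← mul_pow]
    apply pow_le_pow_left₀ (by positivity)
    nlinarith [Nat.cast_nonneg (α := ℝ) P, Nat.cast_nonneg (α := ℝ) Q, Nat.cast_nonneg (α := ℝ) j]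
  have hbbpos : 0 < bb (N+1) (P+1) (Q+1) j := lt_of_lt_of_le (by positivity) hlo
  constructor
  · unfold aa
    rw [hx]
    calc CG (N+1) (P+1) (Q+1) * (A / ((P+1).ascFactorial (Q + N + 2) : ℝ)) * 2 ^ i
          * ((j:ℝ) + 1) ^ i / ((j:ℝ) + 1) ^ (N + 2)
        = CG (N+1) (P+1) (Q+1) * (A / ((P+1).ascFactorial (Q + N + 2) : ℝ) / ((j:ℝ) + 1) ^ (N + 2))
          * ((2:ℝ) ^ i * ((j:ℝ) + 1) ^ i) := by ring
      _ ≤ CG (N+1) (P+1) (Q+1) * bb (N+1) (P+1) (Q+1) j * (2 * (j:ℝ) + P + Q + 2) ^ i := by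
          apply mul_le_mul
          · exact mul_le_mul_of_nonneg_left hlo hCG.le
          · exact hxlo
          · positivity
          · positivity
  · unfold aa
    rw [hx]
    calc CG (N+1) (P+1) (Q+1) * bb (N+1) (P+1) (Q+1) j * (2 * (j:ℝ) + P + Q + 2) ^ i
        ≤ CG (N+1) (P+1) (Q+1) * (A * (Q.factorial : ℝ) / ((j:ℝ) + 1) ^ (N + 2))
          * (((P:ℝ) + Q + 2) ^ i * ((j:ℝ) + 1) ^ i) := by
          apply mul_le_mul
          · exact mul_le_mul_of_nonneg_left hup hCG.le
          · exact hxup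
          · positivity
          · positivity
      _ = CG (N+1) (P+1) (Q+1) * (A * (Q.factorial : ℝ)) * ((P:ℝ) + Q + 2) ^ i
          * ((j:ℝ) + 1) ^ i / ((j:ℝ) + 1) ^ (N + 2) := by ring

lemma C_nonneg {a : ℕ → ℝ} {C : ℝ} {i : ℕ} (hb : ∀ j, |a j| ≤ C * ((j:ℝ)+1)^i) : 0 ≤ C := by
  have h := hb 0
  simp at h
  linarith [abs_nonneg (a 0)]

lemma summable_series {a : ℕ → ℝ} {C : ℝ} {i : ℕ} (hb : ∀ j, |a j| ≤ C * ((j:ℝ)+1)^i)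
    {t : ℝ} (ht : |t| < 1) : Summable (fun j => a j * t ^ j) := by
  refine Summable.of_norm_bounded (g := fun j => C * (((j:ℝ)+1)^i * |t| ^ j)) ?_ fun j => ?_
  · exact (summable_pow_succ i (abs_nonneg t) ht).mul_left C
  · rw [norm_mul, norm_pow, Real.norm_eq_abs, Real.norm_eq_abs]
    calc |a j| * |t| ^ j ≤ (C * ((j:ℝ)+1)^i) * |t| ^ j :=
          mul_le_mul_of_nonneg_right (hb j) (pow_nonneg (abs_nonneg t) j)
      _ = C * (((j:ℝ)+1)^i * |t| ^ j) := by ring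

lemma deriv_term_bound {a : ℕ → ℝ} {C : ℝ} {i : ℕ} (hb : ∀ j, |a j| ≤ C * ((j:ℝ)+1)^i)
    {y r : ℝ} (hy : |y| ≤ r) (hr0 : 0 < r) (j : ℕ) :
    ‖a j * ((j:ℝ) * y ^ (j-1))‖ ≤ (C / r) * (((j:ℝ)+1)^(i+1) * r ^ j) := by
  have hC : 0 ≤ C := C_nonneg hb
  cases j with
  | zero => simp; positivity
  | succ J =>
    rw [norm_mul, norm_mul, norm_pow, Real.norm_eq_abs, Real.norm_eq_abs, Real.norm_eq_abs]
    have h1 : |y| ^ (J + 1 - 1) ≤ r ^ J := by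
      simpa using pow_le_pow_left₀ (abs_nonneg y) hy J
    have h2 : |((J:ℝ) + 1)| = (J:ℝ) + 1 := abs_of_nonneg (by positivity)
    push_cast
    rw [h2]
    have key : |a (J+1)| * (((J:ℝ) + 1) * |y| ^ (J + 1 - 1))
        ≤ (C * ((J:ℝ)+1+1)^i) * (((J:ℝ) + 1+1) * r ^ J) := by
      apply mul_le_mul (by exact_mod_cast hb (J+1))
      · apply mul_le_mul (by linarith) h1 (by positivity) (by positivity)
      · positivity
      · positivity
    calc |a (J+1)| * (((J:ℝ) + 1) * |y| ^ (J + 1 - 1))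
        ≤ (C * ((J:ℝ)+1+1)^i) * (((J:ℝ) + 1+1) * r ^ J) := key
      _ = C / r * (((J:ℝ) + 1 + 1) ^ (i + 1) * r ^ (J+1)) := by
          rw [pow_succ (((J:ℝ)+1+1)) i, pow_succ r J]
          field_simp

lemma summable_deriv_series {a : ℕ → ℝ} {C : ℝ} {i : ℕ} (hb : ∀ j, |a j| ≤ C * ((j:ℝ)+1)^i)
    {t : ℝ} (ht : |t| < 1) : Summable (fun j => a j * ((j:ℝ) * t ^ (j-1))) := by
  set r : ℝ := (1 + |t|) / 2 with hrdef
  have hr0 : 0 < r := by positivity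
  have hr1 : r < 1 := by rw [hrdef]; linarith
  have htr : |t| ≤ r := by rw [hrdef]; linarith [abs_nonneg t]
  refine Summable.of_norm_bounded (g := fun j => (C / r) * (((j:ℝ)+1)^(i+1) * r ^ j)) ?_
    (fun j => deriv_term_bound hb htr hr0 j)
  exact (summable_pow_succ (i+1) hr0.le hr1).mul_left _

lemma hasDerivAt_series {a : ℕ → ℝ} {C : ℝ} {i : ℕ} (hb : ∀ j, |a j| ≤ C * ((j:ℝ)+1)^i)
    {t : ℝ} (ht : |t| < 1) :
    HasDerivAt (fun z : ℝ => ∑' j, a j * z ^ j) (∑' j, a j * ((j:ℝ) * t ^ (j-1))) t := by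
  set r : ℝ := (1 + |t|) / 2 with hrdef
  have hr0 : 0 < r := by positivity
  have hr1 : r < 1 := by rw [hrdef]; linarith
  have htr : |t| < r := by rw [hrdef]; linarith [abs_nonneg t]
  have htmem : t ∈ Ioo (-r) r := by
    constructor <;> [linarith [neg_abs_le t]; linarith [le_abs_self t]]
  refine hasDerivAt_tsum_of_isPreconnected
    (u := fun j : ℕ => (C / r) * (((j:ℝ)+1)^(i+1) * r ^ j))
    ((summable_pow_succ (i+1) hr0.le hr1).mul_left _)
    isOpen_Ioo (convex_Ioo _ _).isPreconnected
    (fun j y _ => (hasDerivAt_pow j y).const_mul (a j))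
    (fun j y hy => ?_) htmem (summable_series hb ht) htmem
  have hyr : |y| ≤ r := by
    rw [abs_le]
    exact ⟨hy.1.le, hy.2.le⟩
  exact deriv_term_bound hb hyr hr0 j

/-- Main representation lemma. -/
lemma rep (n p q : ℕ)
    (hb : ∀ i, ∃ C : ℝ, ∀ j, |aa n p q i j| ≤ C * ((j:ℝ)+1)^i) (i : ℕ) :
    ∀ t ∈ Ioo (0:ℝ) 1,
      opD^[i] (fun u => u ^ (((p : ℝ) + q) / 2) * Spq n p q u) t
        = t ^ (((p : ℝ) + q) / 2) * ∑' j, aa n p q i j * t ^ j := by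
  induction i with
  | zero =>
    intro t _
    simp [Spq_eq]
  | succ i ih =>
    intro t ht
    obtain ⟨C, hCb⟩ := hb i
    have ht0 : 0 < t := ht.1
    have ht1 : |t| < 1 := by rw [abs_of_pos ht0]; exact ht.2
    set α : ℝ := ((p : ℝ) + q) / 2 with hα
    have hD : HasDerivAt (fun z : ℝ => ∑' j, aa n p q i j * z ^ j)
        (∑' j, aa n p q i j * ((j:ℝ) * t ^ (j-1))) t := hasDerivAt_series hCb ht1
    have hrp : HasDerivAt (fun z : ℝ => z ^ α) (α * t ^ (α - 1)) t :=
      Real.hasDerivAt_rpow_const (Or.inl ht0.ne')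
    have hmul : HasDerivAt (fun z : ℝ => z ^ α * ∑' j, aa n p q i j * z ^ j)
        (α * t ^ (α - 1) * ∑' j, aa n p q i j * t ^ j + t ^ α * ∑' j, aa n p q i j * ((j:ℝ) * t ^ (j-1))) t :=
      hrp.mul hD
    have heq : (fun z => opD^[i] (fun u => u ^ α * Spq n p q u) z)
        =ᶠ[nhds t] fun z => z ^ α * ∑' j, aa n p q i j * z ^ j :=
      eventually_of_mem (isOpen_Ioo.mem_nhds ht) ih
    rw [Function.iterate_succ_apply', opD, heq.deriv_eq, hmul.deriv]
    -- now algebraic computation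
    set H : ℝ := ∑' j, aa n p q i j * t ^ j with hH
    set D : ℝ := ∑' j, aa n p q i j * ((j:ℝ) * t ^ (j-1)) with hDdef
    have hsum0 : Summable (fun j => aa n p q i j * t ^ j) := summable_series hCb ht1
    have hsum1 : Summable (fun j => aa n p q i j * ((j:ℝ) * t ^ (j-1))) :=
      summable_deriv_series hCb ht1
    have haa : ∀ j : ℕ, aa n p q (i+1) j * t ^ j
        = 2 * t * (aa n p q i j * ((j:ℝ) * t ^ (j-1))) + ((p:ℝ)+q) * (aa n p q i j * t ^ j) := by
      intro j
      have : aa n p q (i+1) j = aa n p q i j * (2 * (j:ℝ) + p + q) := by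
        simp [aa, pow_succ]
        ring
      rw [this]
      cases j with
      | zero => simp; ring
      | succ J =>
        have : (J + 1 : ℕ) - 1 = J := rfl
        rw [this]
        have : t ^ (J + 1) = t ^ J * t := pow_succ t J
        rw [this]
        push_cast
        ring
    have htsum : ∑' j, aa n p q (i+1) j * t ^ j = 2 * t * D + ((p:ℝ)+q) * H := by
      rw [tsum_congr haa, Summable.tsum_add (hsum1.mul_left _) (hsum0.mul_left _),
        _root_.tsum_mul_left, _root_.tsum_mul_left]
    rw [htsum]
    have hα1 : t ^ (α - 1) = t ^ α / t := by
      rw [Real.rpow_sub ht0, Real.rpow_one]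
    rw [hα1]
    field_simp
    ring

lemma tsum_upper {a : ℕ → ℝ} {c : ℝ} {K : ℕ} (hb : ∀ j : ℕ, a j ≤ c * ((j:ℝ)+1)^K)
    (hb0 : ∀ j, 0 ≤ a j) {t : ℝ} (ht0 : 0 ≤ t) (ht1 : t < 1) :
    ∑' j, a j * t ^ j ≤ c * (K.factorial : ℝ) / (1 - t) ^ (K + 1) := by
  have hc : 0 ≤ c := by
    have h0 := hb 0
    have h1 := hb0 0
    simp at h0
    linarith
  have habs : |t| < 1 := by rwa [abs_of_nonneg ht0]
  have hAsc := hasSum_asc habs K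
  have hbb : ∀ j, |a j| ≤ c * ((j:ℝ)+1)^K := fun j => by
    rw [abs_of_nonneg (hb0 j)]; exact hb j
  calc ∑' j, a j * t ^ j
      ≤ ∑' j, c * (((j + 1).ascFactorial K : ℝ) * t ^ j) := by
        refine Summable.tsum_le_tsum (fun j => ?_) (summable_series hbb habs) (hAsc.summable.mul_left c)
        have h1 : a j * t ^ j ≤ (c * ((j:ℝ)+1)^K) * t ^ j :=
          mul_le_mul_of_nonneg_right (hb j) (pow_nonneg ht0 j)
        refine h1.trans ?_
        have h2 : ((j:ℝ)+1)^K * t ^ j ≤ ((j + 1).ascFactorial K : ℝ) * t ^ j :=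
          mul_le_mul_of_nonneg_right (asc_lower' 1 j K le_rfl) (pow_nonneg ht0 j)
        calc c * ((j:ℝ)+1)^K * t ^ j = c * (((j:ℝ)+1)^K * t ^ j) := by ring
          _ ≤ c * (((j + 1).ascFactorial K : ℝ) * t ^ j) := mul_le_mul_of_nonneg_left h2 hc
    _ = c * ((K.factorial : ℝ) / (1 - t) ^ (K + 1)) := by
        rw [_root_.tsum_mul_left, hAsc.tsum_eq]
    _ = c * (K.factorial : ℝ) / (1 - t) ^ (K + 1) := by ring

lemma tsum_lower {a : ℕ → ℝ} {c : ℝ} {K : ℕ} (hc : 0 ≤ c) (hb : ∀ j : ℕ, c * ((j:ℝ)+1)^K ≤ a j)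
    {t : ℝ} (hsum : Summable (fun j => a j * t ^ j)) (ht0 : 0 ≤ t) (ht1 : t < 1) :
    c / (1 - t) ^ (K + 1) ≤ ∑' j, a j * t ^ j := by
  have habs : |t| < 1 := by rwa [abs_of_nonneg ht0]
  have hAsc := hasSum_asc habs K
  have hKfac : (0:ℝ) < (K.factorial : ℝ) := by exact_mod_cast K.factorial_pos
  calc c / (1 - t) ^ (K + 1)
      = (c / K.factorial) * ((K.factorial : ℝ) / (1 - t) ^ (K + 1)) := by
        field_simp
    _ = ∑' j, (c / K.factorial) * (((j + 1).ascFactorial K : ℝ) * t ^ j) := by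
        rw [_root_.tsum_mul_left, hAsc.tsum_eq]
    _ ≤ ∑' j, a j * t ^ j := by
        refine Summable.tsum_le_tsum (fun j => ?_) (hAsc.summable.mul_left _) hsum
        have h2 : ((j + 1).ascFactorial K : ℝ) ≤ (K.factorial : ℝ) * ((j:ℝ)+1)^K := by
          have := asc_upper' 1 j K le_rfl
          simpa [Nat.one_ascFactorial] using this
        have h3 : (c / K.factorial) * (((j + 1).ascFactorial K : ℝ) * t ^ j)
            ≤ (c / K.factorial) * (((K.factorial : ℝ) * ((j:ℝ)+1)^K) * t ^ j) := by
          apply mul_le_mul_of_nonneg_left _ (by positivity)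
          exact mul_le_mul_of_nonneg_right h2 (pow_nonneg ht0 j)
        refine h3.trans ?_
        have h4 : (c / K.factorial) * (((K.factorial : ℝ) * ((j:ℝ)+1)^K) * t ^ j)
            = (c * ((j:ℝ)+1)^K) * t ^ j := by
          field_simp
        rw [h4]
        exact mul_le_mul_of_nonneg_right (hb j) (pow_nonneg ht0 j)

lemma tsum_upper0 {a : ℕ → ℝ} {c : ℝ} (hb : ∀ j : ℕ, a j ≤ c / ((j:ℝ)+1)) (hb0 : ∀ j, 0 ≤ a j)
    {t : ℝ} (ht0 : 0 < t) (ht1 : t < 1) :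
    ∑' j, a j * t ^ j ≤ (c / t) * (-Real.log (1 - t)) := by
  have hc : 0 ≤ c := by
    have h0 := hb 0
    have h1 := hb0 0
    simp at h0
    linarith
  have hlog := (Real.hasSum_pow_div_log_of_abs_lt_one (x := t)
    (by rw [abs_of_pos ht0]; exact ht1)).mul_left (c / t)
  have hbb : ∀ j, |a j| ≤ c * ((j:ℝ)+1)^0 := fun j => by
    rw [abs_of_nonneg (hb0 j), pow_zero, mul_one]
    refine (hb j).trans ?_
    exact div_le_self hc (by linarith [Nat.cast_nonneg (α := ℝ) j])
  have hterm : ∀ j : ℕ, a j * t ^ j ≤ (c / t) * (t ^ (j+1) / ((j:ℝ)+1)) := by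
    intro j
    have he : (c / t) * (t ^ (j+1) / ((j:ℝ)+1)) = (c / ((j:ℝ)+1)) * t ^ j := by
      rw [pow_succ]
      field_simp
    rw [he]
    exact mul_le_mul_of_nonneg_right (hb j) (pow_nonneg ht0.le j)
  refine le_trans (Summable.tsum_le_tsum hterm
    (summable_series hbb (by rw [abs_of_pos ht0]; exact ht1)) hlog.summable)
    (le_of_eq hlog.tsum_eq)

lemma rpow_sq {x : ℝ} (hx : 0 ≤ x) (a : ℝ) : (x ^ a) ^ 2 = x ^ (2 * a) := by
  rw [← Real.rpow_natCast (x ^ a) 2, ← Real.rpow_mul hx]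
  norm_num
  rw [mul_comm]

lemma pow_to_rpow {x : ℝ} (hx : 0 ≤ x) (K : ℕ) : x ^ (K + 1) = x ^ ((K:ℝ) + 1) := by
  rw [← Real.rpow_natCast x (K + 1)]
  push_cast
  rfl

lemma div_pow_to_rpow {x : ℝ} (hx : 0 < x) (c : ℝ) (K : ℕ) :
    c / x ^ (K + 1) = c * x ^ (-((K:ℝ) + 1)) := by
  rw [pow_to_rpow hx.le K, Real.rpow_neg hx.le, div_eq_mul_inv]

lemma main (N P Q k : ℕ) (s : ℝ) (hs : -1 < s) :
    MeasureTheory.IntegrableOn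
      (fun t => t ^ (((N+1 : ℕ) : ℝ) - 1) * (1 - t) ^ s *
        (opD^[(N+1) + k] (fun u => u ^ ((((P+1 : ℕ) : ℝ) + ((Q+1 : ℕ) : ℝ)) / 2) *
           Spq (N+1) (P+1) (Q+1) u) t) ^ 2)
      (Set.Ioo (0:ℝ) 1) ↔ 2 * (k : ℝ) - 1 < s := by
  have hb : ∀ i, ∃ C : ℝ, ∀ j, |aa (N+1) (P+1) (Q+1) i j| ≤ C * ((j:ℝ)+1)^i := by
    intro i
    obtain ⟨d1, d2, hd1, hd2, hdb⟩ := aa_bounds N P Q i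
    refine ⟨d2, fun j => ?_⟩
    have hpos : 0 < aa (N+1) (P+1) (Q+1) i j :=
      lt_of_lt_of_le (by positivity) (hdb j).1
    rw [abs_of_pos hpos]
    refine le_trans (hdb j).2 ?_
    have h1 : (1:ℝ) ≤ ((j:ℝ)+1)^(N+2) :=
      one_le_pow₀ (by linarith [Nat.cast_nonneg (α := ℝ) j])
    exact div_le_self (by positivity) h1
  set m := N + 1 + k with hm
  obtain ⟨c1, c2, hc1, hc2, hcb⟩ := aa_bounds N P Q m
  obtain ⟨CM, hCM⟩ := hb m
  have hrep := rep (N+1) (P+1) (Q+1) hb m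
  set α : ℝ := (((P+1 : ℕ) : ℝ) + ((Q+1 : ℕ) : ℝ)) / 2 with hα
  have hα1 : 1 ≤ α := by rw [hα]; push_cast; linarith [Nat.cast_nonneg (α := ℝ) P, Nat.cast_nonneg (α := ℝ) Q]
  have hν0 : 0 ≤ ((N+1 : ℕ) : ℝ) - 1 := by push_cast; linarith [Nat.cast_nonneg (α := ℝ) N]
  have haapos : ∀ j, 0 < aa (N+1) (P+1) (Q+1) m j := fun j =>
    lt_of_lt_of_le (by positivity) (hcb j).1
  set h : ℝ → ℝ := fun t => ∑' j, aa (N+1) (P+1) (Q+1) m j * t ^ j with hhdef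
  have hh0 : ∀ t : ℝ, 0 ≤ t → 0 ≤ h t := fun t ht =>
    tsum_nonneg fun j => mul_nonneg (haapos j).le (pow_nonneg ht j)
  have hhsum : ∀ t : ℝ, 0 ≤ t → t < 1 → Summable (fun j => aa (N+1) (P+1) (Q+1) m j * t ^ j) :=
    fun t h0 h1 => summable_series hCM (by rwa [abs_of_nonneg h0])
  set G : ℝ → ℝ := fun t => t ^ (((N+1 : ℕ) : ℝ) - 1) * (1 - t) ^ s * (t ^ α * h t) ^ 2 with hG
  have hcongr : Set.EqOn (fun t => t ^ (((N+1 : ℕ) : ℝ) - 1) * (1 - t) ^ s *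
      (opD^[m] (fun u => u ^ α * Spq (N+1) (P+1) (Q+1) u) t) ^ 2) G (Ioo 0 1) := by
    intro t ht
    simp only [hG]
    rw [hrep t ht]
  rw [integrableOn_congr_fun hcongr measurableSet_Ioo]
  have hGcont : ContinuousOn G (Ioo (0:ℝ) 1) := by
    intro t ht
    have l1 : ContinuousAt (fun z : ℝ => z ^ (((N+1 : ℕ) : ℝ) - 1)) t :=
      Real.continuousAt_rpow_const t _ (Or.inl ht.1.ne')
    have l2 : ContinuousAt (fun z : ℝ => (1 - z) ^ s) t :=
      ContinuousAt.rpow_const ((continuous_const.sub continuous_id).continuousAt)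
        (Or.inl (by intro hc; rw [sub_eq_zero] at hc; (try simp only [id_eq] at hc); linarith [ht.2]))
    have l3 : ContinuousAt (fun z : ℝ => z ^ α) t :=
      Real.continuousAt_rpow_const t _ (Or.inl ht.1.ne')
    have l4 : ContinuousAt h t :=
      (hasDerivAt_series hCM (by rw [abs_of_pos ht.1]; exact ht.2)).continuousAt
    exact ((l1.mul l2).mul ((l3.mul l4).pow 2)).continuousWithinAt
  have hGmeas : AEStronglyMeasurable G (volume.restrict (Ioo 0 1)) :=
    hGcont.aestronglyMeasurable measurableSet_Ioo
  have hGnonneg : ∀ t ∈ Ioo (0:ℝ) 1, 0 ≤ G t := by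
    intro t ht
    have hu : (0:ℝ) < 1 - t := by linarith [ht.2]
    exact mul_nonneg (mul_nonneg (Real.rpow_nonneg ht.1.le _) (Real.rpow_nonneg hu.le _))
      (sq_nonneg _)
  cases k with
  | zero =>
    rw [iff_true_intro (show 2 * ((0:ℕ):ℝ) - 1 < s by push_cast; linarith)]
    simp only [iff_true]
    -- domination by M * (1-t)^(s - 2ε)
    set ε : ℝ := (s + 1) / 4 with hε
    have hε0 : 0 < ε := by rw [hε]; linarith
    have hbK : ∀ j : ℕ, aa (N+1) (P+1) (Q+1) m j ≤ c2 / ((j:ℝ)+1) := by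
      intro j
      refine le_trans (hcb j).2 (le_of_eq ?_)
      have e : ((j:ℝ)+1)^(N+2) = ((j:ℝ)+1)^m * ((j:ℝ)+1) := pow_succ _ (N+1)
      rw [e]
      have hj0 : ((j:ℝ)+1)^m ≠ 0 := by positivity
      field_simp
    have hbnd : ∀ t ∈ Ioo (0:ℝ) 1,
        G t ≤ (c2 * ε⁻¹)^2 * (1 - t) ^ (s - 2 * ε) := by
      intro t ht
      have ht0 := ht.1
      have hu : (0:ℝ) < 1 - t := by linarith [ht.2]
      have h1 : h t ≤ (c2 / t) * (-Real.log (1 - t)) :=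
        tsum_upper0 hbK (fun j => (haapos j).le) ht0 ht.2
      have h2 : h t ≤ (c2 / t) * (ε⁻¹ * (1 - t) ^ (-ε)) := by
        refine h1.trans (mul_le_mul_of_nonneg_left (neg_log_le ht0 ht.2 hε0) (by positivity))
      have h3 : t ^ α * h t ≤ c2 * ε⁻¹ * (1 - t) ^ (-ε) := by
        have h4 : t ^ α * h t ≤ t ^ α * ((c2 / t) * (ε⁻¹ * (1 - t) ^ (-ε))) :=
          mul_le_mul_of_nonneg_left h2 (Real.rpow_nonneg ht0.le α)
        refine h4.trans ?_
        have h5 : t ^ α * ((c2 / t) * (ε⁻¹ * (1 - t) ^ (-ε)))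
            = (t ^ (α - 1)) * (c2 * ε⁻¹ * (1 - t) ^ (-ε)) := by
          rw [Real.rpow_sub ht0, Real.rpow_one]
          field_simp
          all_goals ring
        rw [h5]
        have h6 : t ^ (α - 1) ≤ 1 :=
          Real.rpow_le_one ht0.le ht.2.le (by linarith)
        have h7 : 0 ≤ c2 * ε⁻¹ * (1 - t) ^ (-ε) := by positivity
        nlinarith [h6, h7]
      have h8 : 0 ≤ t ^ α * h t := mul_nonneg (Real.rpow_nonneg ht0.le α) (hh0 t ht0.le)
      have h9 : (t ^ α * h t) ^ 2 ≤ (c2 * ε⁻¹ * (1 - t) ^ (-ε)) ^ 2 :=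
        pow_le_pow_left₀ h8 h3 2
      have h10 : (c2 * ε⁻¹ * (1 - t) ^ (-ε)) ^ 2 = (c2 * ε⁻¹)^2 * (1 - t) ^ (-(2*ε)) := by
        rw [mul_pow, rpow_sq hu.le]
        ring_nf
      have h11 : t ^ (((N+1 : ℕ) : ℝ) - 1) ≤ 1 := Real.rpow_le_one ht0.le ht.2.le hν0
      have h12 : G t ≤ 1 * (1 - t) ^ s * ((c2 * ε⁻¹)^2 * (1 - t) ^ (-(2*ε))) := by
        rw [hG]
        rw [← h10]
        apply mul_le_mul
        · exact mul_le_mul_of_nonneg_right h11 (Real.rpow_nonneg hu.le s)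
        · exact h9
        · exact sq_nonneg _
        · positivity
      refine h12.trans (le_of_eq ?_)
      rw [one_mul, show s - 2*ε = s + -(2*ε) by ring, Real.rpow_add hu]
      ring
    have hint : IntegrableOn (fun t : ℝ => (c2 * ε⁻¹)^2 * (1 - t) ^ (s - 2 * ε)) (Ioo 0 1) := by
      have hbase : IntegrableOn (fun t : ℝ => (1 - t) ^ (s - 2 * ε)) (Ioo (0:ℝ) 1) := by
        rw [integrableOn_one_sub_rpow_iff le_rfl one_pos, hε]
        linarith
      exact hbase.const_mul _
    refine Integrable.mono' hint hGmeas ?_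
    refine (ae_restrict_iff' measurableSet_Ioo).2 (Filter.Eventually.of_forall fun t ht => ?_)
    rw [Real.norm_eq_abs, abs_of_nonneg (hGnonneg t ht)]
    exact hbnd t ht
  | succ K =>
    have hbup : ∀ j : ℕ, aa (N+1) (P+1) (Q+1) m j ≤ c2 * ((j:ℝ)+1)^K := by
      intro j
      refine le_trans (hcb j).2 (le_of_eq ?_)
      rw [show m = K + (N+2) by omega, pow_add]
      field_simp
    have hblo : ∀ j : ℕ, c1 * ((j:ℝ)+1)^K ≤ aa (N+1) (P+1) (Q+1) m j := by
      intro j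
      refine le_trans (le_of_eq ?_) (hcb j).1
      rw [show m = K + (N+2) by omega, pow_add]
      field_simp
    have hup : ∀ t ∈ Ioo (0:ℝ) 1, h t ≤ (c2 * K.factorial) * (1-t) ^ (-((K:ℝ)+1)) := by
      intro t ht
      have hu : (0:ℝ) < 1 - t := by linarith [ht.2]
      have := tsum_upper hbup (fun j => (haapos j).le) ht.1.le ht.2
      rw [div_pow_to_rpow hu] at this
      exact this
    have hlo : ∀ t ∈ Ioo (0:ℝ) 1, c1 * (1-t) ^ (-((K:ℝ)+1)) ≤ h t := by
      intro t ht
      have hu : (0:ℝ) < 1 - t := by linarith [ht.2]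
      have := tsum_lower hc1.le hblo (hhsum t ht.1.le ht.2) ht.1.le ht.2
      rw [div_pow_to_rpow hu] at this
      exact this
    constructor
    · -- integrable → exponent condition
      intro hInt
      have hInt2 : IntegrableOn G (Ioo (1/2 : ℝ) 1) :=
        hInt.mono_set (Ioo_subset_Ioo (by norm_num) le_rfl)
      set mlow : ℝ := (2⁻¹ : ℝ) ^ (((N+1 : ℕ) : ℝ) - 1) * ((2⁻¹ : ℝ) ^ α * c1)^2 with hmlow
      have hmlow0 : 0 < mlow := by
        rw [hmlow]
        have g1 : (0:ℝ) < (2⁻¹ : ℝ) ^ (((N+1 : ℕ) : ℝ) - 1) := Real.rpow_pos_of_pos (by norm_num) _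
        have g2 : (0:ℝ) < (2⁻¹ : ℝ) ^ α := Real.rpow_pos_of_pos (by norm_num) _
        positivity
      have hGlow : ∀ t ∈ Ioo ((1:ℝ)/2) 1,
          mlow * (1 - t) ^ (s - 2 * ((K:ℝ)+1)) ≤ G t := by
        intro t ht
        have ht' : t ∈ Ioo (0:ℝ) 1 := ⟨by linarith [ht.1], ht.2⟩
        have ht0 := ht'.1
        have hu : (0:ℝ) < 1 - t := by linarith [ht.2]
        have g1 : (2⁻¹ : ℝ) ^ (((N+1 : ℕ) : ℝ) - 1) ≤ t ^ (((N+1 : ℕ) : ℝ) - 1) :=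
          Real.rpow_le_rpow (by norm_num) (by linarith [ht.1]) hν0
        have g2 : (2⁻¹ : ℝ) ^ α ≤ t ^ α :=
          Real.rpow_le_rpow (by norm_num) (by linarith [ht.1]) (by linarith)
        have g3 : ((2⁻¹ : ℝ) ^ α * c1) * (1-t) ^ (-((K:ℝ)+1)) ≤ t ^ α * h t := by
          have g4 : ((2⁻¹ : ℝ) ^ α * c1) * (1-t) ^ (-((K:ℝ)+1))
              = (2⁻¹ : ℝ) ^ α * (c1 * (1-t) ^ (-((K:ℝ)+1))) := by ring
          rw [g4]
          apply mul_le_mul g2 (hlo t ht') (by positivity) (Real.rpow_nonneg ht0.le α)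
        have g5 : (((2⁻¹ : ℝ) ^ α * c1) * (1-t) ^ (-((K:ℝ)+1)))^2 ≤ (t ^ α * h t)^2 := by
          apply pow_le_pow_left₀ (by positivity) g3
        have g6 : (((2⁻¹ : ℝ) ^ α * c1) * (1-t) ^ (-((K:ℝ)+1)))^2
            = ((2⁻¹ : ℝ) ^ α * c1)^2 * (1-t) ^ (-(2*((K:ℝ)+1))) := by
          rw [mul_pow, rpow_sq hu.le]
          ring_nf
        have g7 : mlow * (1 - t) ^ (s - 2 * ((K:ℝ)+1))
            = ((2⁻¹ : ℝ) ^ (((N+1 : ℕ) : ℝ) - 1)) * (1-t) ^ s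
              * (((2⁻¹ : ℝ) ^ α * c1)^2 * (1-t) ^ (-(2*((K:ℝ)+1)))) := by
          rw [hmlow, show s - 2*((K:ℝ)+1) = s + -(2*((K:ℝ)+1)) by ring, Real.rpow_add hu]
          ring
        rw [g7, hG, ← g6]
        apply mul_le_mul
        · exact mul_le_mul_of_nonneg_right g1 (Real.rpow_nonneg hu.le s)
        · exact g5
        · positivity
        · exact mul_nonneg (Real.rpow_nonneg ht0.le _) (Real.rpow_nonneg hu.le s)
      have hIr : IntegrableOn (fun t : ℝ => (1 - t) ^ (s - 2 * ((K:ℝ)+1))) (Ioo (1/2 : ℝ) 1) := by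
        refine Integrable.mono' (hInt2.const_mul mlow⁻¹) ?_ ?_
        · refine ContinuousOn.aestronglyMeasurable ?_ measurableSet_Ioo
          intro t ht
          exact (ContinuousAt.rpow_const ((continuous_const.sub continuous_id).continuousAt)
            (Or.inl (by intro hc; simp only [Pi.sub_apply, id_eq] at hc; rw [sub_eq_zero] at hc; (try simp only [id_eq] at hc); linarith [ht.2]))).continuousWithinAt
        · refine (ae_restrict_iff' measurableSet_Ioo).2 (Filter.Eventually.of_forall fun t ht => ?_)
          have ht' : t ∈ Ioo (0:ℝ) 1 := ⟨by linarith [ht.1], ht.2⟩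
          have hu : (0:ℝ) < 1 - t := by linarith [ht.2]
          rw [Real.norm_eq_abs, abs_of_nonneg (Real.rpow_nonneg hu.le _)]
          calc (1 - t) ^ (s - 2 * ((K:ℝ)+1)) ≤ mlow⁻¹ * (mlow * (1 - t) ^ (s - 2 * ((K:ℝ)+1))) := by
                rw [← mul_assoc, inv_mul_cancel₀ hmlow0.ne', one_mul]
            _ ≤ mlow⁻¹ * G t := mul_le_mul_of_nonneg_left (hGlow t ht) (by positivity)
      rw [integrableOn_one_sub_rpow_iff (by norm_num) (by norm_num)] at hIr
      push_cast
      linarith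
    · -- exponent condition → integrable
      intro hks
      have hbnd : ∀ t ∈ Ioo (0:ℝ) 1,
          G t ≤ (c2 * K.factorial)^2 * (1 - t) ^ (s - 2 * ((K:ℝ)+1)) := by
        intro t ht
        have ht0 := ht.1
        have hu : (0:ℝ) < 1 - t := by linarith [ht.2]
        have h11 : t ^ (((N+1 : ℕ) : ℝ) - 1) ≤ 1 := Real.rpow_le_one ht0.le ht.2.le hν0
        have h12 : t ^ α ≤ 1 := Real.rpow_le_one ht0.le ht.2.le (by linarith)
        have h3 : t ^ α * h t ≤ (c2 * K.factorial) * (1-t) ^ (-((K:ℝ)+1)) := by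
          calc t ^ α * h t ≤ 1 * ((c2 * K.factorial) * (1-t) ^ (-((K:ℝ)+1))) := by
                apply mul_le_mul h12 (hup t ht) (hh0 t ht0.le) (by norm_num)
            _ = (c2 * K.factorial) * (1-t) ^ (-((K:ℝ)+1)) := by ring
        have h8 : 0 ≤ t ^ α * h t := mul_nonneg (Real.rpow_nonneg ht0.le α) (hh0 t ht0.le)
        have h9 : (t ^ α * h t) ^ 2 ≤ ((c2 * K.factorial) * (1-t) ^ (-((K:ℝ)+1)))^2 :=
          pow_le_pow_left₀ h8 h3 2
        have h10 : ((c2 * K.factorial) * (1-t) ^ (-((K:ℝ)+1)))^2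
            = (c2 * K.factorial)^2 * (1-t) ^ (-(2*((K:ℝ)+1))) := by
          rw [mul_pow, rpow_sq hu.le]
          ring_nf
        have h13 : G t ≤ 1 * (1 - t) ^ s * ((c2 * K.factorial)^2 * (1-t) ^ (-(2*((K:ℝ)+1)))) := by
          rw [hG, ← h10]
          apply mul_le_mul
          · exact mul_le_mul_of_nonneg_right h11 (Real.rpow_nonneg hu.le s)
          · exact h9
          · exact sq_nonneg _
          · positivity
        refine h13.trans (le_of_eq ?_)
        rw [one_mul, show s - 2*((K:ℝ)+1) = s + -(2*((K:ℝ)+1)) by ring, Real.rpow_add hu]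
        ring
      have hint : IntegrableOn
          (fun t : ℝ => (c2 * K.factorial)^2 * (1 - t) ^ (s - 2 * ((K:ℝ)+1))) (Ioo 0 1) := by
        have hbase : IntegrableOn (fun t : ℝ => (1 - t) ^ (s - 2 * ((K:ℝ)+1))) (Ioo (0:ℝ) 1) := by
          rw [integrableOn_one_sub_rpow_iff le_rfl one_pos]
          push_cast at hks
          linarith
        exact hbase.const_mul _
      refine Integrable.mono' hint hGmeas ?_
      refine (ae_restrict_iff' measurableSet_Ioo).2 (Filter.Eventually.of_forall fun t ht => ?_)
      rw [Real.norm_eq_abs, abs_of_nonneg (hGnonneg t ht)]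
      exact hbnd t ht

end Stmt18

/-- The integral defining `c_{pq,n+k}(s)` is finite iff `s > 2k - 1`. -/
theorem statement18 (n : ℕ) (hn : 1 ≤ n) (s : ℝ) (hs : -1 < s) (k p q : ℕ)
    (hp : 1 ≤ p) (hq : 1 ≤ q) :
    MeasureTheory.IntegrableOn
      (fun t => t ^ ((n : ℝ) - 1) * (1 - t) ^ s *
        (opD^[n + k] (fun u => u ^ (((p : ℝ) + q) / 2) * Spq n p q u) t) ^ 2)
      (Set.Ioo (0:ℝ) 1) ↔ 2 * (k : ℝ) - 1 < s := by
  obtain ⟨N, rfl⟩ : ∃ N, n = N + 1 := ⟨n - 1, by omega⟩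
  obtain ⟨P, rfl⟩ : ∃ P, p = P + 1 := ⟨p - 1, by omega⟩
  obtain ⟨Q, rfl⟩ : ∃ Q, q = Q + 1 := ⟨q - 1, by omega⟩
  exact Stmt18.main N P Q k s hs
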